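/- Let A and B be finite nonempty subsets of an abelian group, let K > 0 be a real number with |A+A| ≤ K·|A|, and let p₁ and p₂ be nonnegative integers. Then |B + p₁A − p₂A| ≤ K^(p₁+p₂+1) · |B+A|, where p₁A denotes the p₁-fold iterated sumset of A and p₁A − p₂A = {x − y : x ∈ p₁A, y ∈ p₂A}. -/

import Mathlib

open Pointwise Finset

private lemma petridis_iter {G : Type} [AddCommGroup G] [DecidableEq G]
    (X A : Finset G) (hX : X.Nonempty)
    (hmin : ∀ X' ⊆ X, #(X + A) * #X' ≤ #(X' + A) * #X) (n : ℕ) (C : Finset G) :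
    ((X + n • A + C).card : ℝ) ≤ ((#(X + A) : ℝ) / #X) ^ n * #(X + C) := by
  have hX0 : (0 : ℝ) < #X := by exact_mod_cast hX.card_pos
  induction n with
  | zero => simp
  | succ n ih =>
      have hre : X + (n + 1) • A + C = X + A + (n • A + C) := by
        rw [succ_nsmul]; abel
      have hpp := Finset.pluennecke_petridis_inequality_add (B := A) (n • A + C) hmin
      have hpp' : ((X + A + (n • A + C)).card : ℝ) * #X ≤ #(X + A) * #(X + (n • A + C)) := by
        have e1 : n • A + C + X + A = X + A + (n • A + C) := by abel
        have e2 : n • A + C + X = X + (n • A + C) := by abel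
        rw [e1, e2] at hpp
        exact_mod_cast hpp
      have h2 : ((X + (n • A + C)).card : ℝ) ≤ ((#(X + A) : ℝ) / #X) ^ n * #(X + C) := by
        have : X + (n • A + C) = X + n • A + C := by rw [add_assoc]
        rw [this]; exact ih
      rw [hre]
      rw [← le_div_iff₀ hX0] at hpp'
      calc ((X + A + (n • A + C)).card : ℝ)
          ≤ #(X + A) * #(X + (n • A + C)) / #X := hpp'
        _ ≤ #(X + A) * (((#(X + A) : ℝ) / #X) ^ n * #(X + C)) / #X := by
            gcongr
        _ = ((#(X + A) : ℝ) / #X) ^ (n + 1) * #(X + C) := by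
            ring

theorem card_add_nsmul_sub_nsmul_le {G : Type} [AddCommGroup G] [DecidableEq G]
    (A B : Finset G) (hA : A.Nonempty) (hB : B.Nonempty) (K : ℝ) (hK : 0 < K)
    (p₁ p₂ : ℕ)
    (hAA : ((A + A).card : ℝ) ≤ K * A.card) :
    ((B + p₁ • A - p₂ • A).card : ℝ) ≤ K ^ (p₁ + p₂ + 1) * (B + A).card := by
  -- pick minimizing subset
  have hA' : A ∈ A.powerset.erase ∅ := mem_erase_of_ne_of_mem hA.ne_empty (mem_powerset_self _)
  obtain ⟨X, hXmem, hXmin⟩ :=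
    exists_min_image (A.powerset.erase ∅) (fun X ↦ (#(X + A) : ℝ) / #X) ⟨A, hA'⟩
  rw [mem_erase, mem_powerset, ← nonempty_iff_ne_empty] at hXmem
  obtain ⟨hXne, hXA⟩ := hXmem
  have hX0 : (0 : ℝ) < #X := by exact_mod_cast hXne.card_pos
  have hA0 : (0 : ℝ) < #A := by exact_mod_cast hA.card_pos
  set r : ℝ := (#(X + A) : ℝ) / #X with hr
  have hr0 : 0 ≤ r := by positivity
  have hrK : r ≤ K := by
    calc r ≤ (#(A + A) : ℝ) / #A := hXmin A hA'
      _ ≤ K := by rw [div_le_iff₀ hA0]; exact hAA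
  have hK1 : 1 ≤ K := by
    have h1 : (#A : ℝ) ≤ #(A + A) := by
      exact_mod_cast Finset.card_le_card_add_right hA
    nlinarith
  have hmin : ∀ X' ⊆ X, #(X + A) * #X' ≤ #(X' + A) * #X := by
    intro X' hX'
    rcases X'.eq_empty_or_nonempty with rfl | hX'ne
    · simp
    have hX'0 : (0 : ℝ) < #X' := by exact_mod_cast hX'ne.card_pos
    have := hXmin X' (mem_erase_of_ne_of_mem hX'ne.ne_empty (mem_powerset.2 (hX'.trans hXA)))
    rw [div_le_div_iff₀ hX0 hX'0] at this
    exact_mod_cast this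
  -- bounds
  have h1 : ((X + p₁ • A + B).card : ℝ) ≤ r ^ p₁ * #(B + A) := by
    calc ((X + p₁ • A + B).card : ℝ) ≤ r ^ p₁ * #(X + B) :=
          petridis_iter X A hXne hmin p₁ B
      _ ≤ r ^ p₁ * #(B + A) := by
          have hsub : X + B ⊆ B + A := by
            rw [add_comm X B]; exact add_subset_add_left hXA
          have hc : ((X + B).card : ℝ) ≤ #(B + A) := by
            exact_mod_cast Finset.card_le_card hsub
          exact mul_le_mul_of_nonneg_left hc (pow_nonneg hr0 _)
  have h2 : ((X + p₂ • A).card : ℝ) ≤ r ^ p₂ * #X := by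
    have := petridis_iter X A hXne hmin p₂ {0}
    simpa using this
  -- Ruzsa triangle
  have hruzsa := Finset.ruzsa_triangle_inequality_sub_add_add (B + p₁ • A) X (p₂ • A)
  have hruzsa' : ((B + p₁ • A - p₂ • A).card : ℝ) * #X ≤ #(X + p₁ • A + B) * #(X + p₂ • A) := by
    have he : B + p₁ • A + X = X + p₁ • A + B := by abel
    have he2 : p₂ • A + X = X + p₂ • A := by abel
    calc ((B + p₁ • A - p₂ • A).card : ℝ) * #X
        ≤ #(B + p₁ • A + X) * #(p₂ • A + X) := by exact_mod_cast hruzsa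
      _ = #(X + p₁ • A + B) * #(X + p₂ • A) := by rw [he, he2]
  have key : ((B + p₁ • A - p₂ • A).card : ℝ) ≤ r ^ (p₁ + p₂) * #(B + A) := by
    rw [← le_div_iff₀ hX0] at hruzsa'
    calc ((B + p₁ • A - p₂ • A).card : ℝ)
        ≤ #(X + p₁ • A + B) * #(X + p₂ • A) / #X := hruzsa'
      _ ≤ (r ^ p₁ * #(B + A)) * (r ^ p₂ * #X) / #X := by gcongr <;> positivity
      _ = r ^ (p₁ + p₂) * #(B + A) := by field_simp; ring
  calc ((B + p₁ • A - p₂ • A).card : ℝ)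
      ≤ r ^ (p₁ + p₂) * #(B + A) := key
    _ ≤ K ^ (p₁ + p₂) * #(B + A) := by gcongr
    _ ≤ K ^ (p₁ + p₂ + 1) * #(B + A) := by
        have hp : K ^ (p₁ + p₂) ≤ K ^ (p₁ + p₂ + 1) := pow_le_pow_right₀ hK1 (Nat.le_succ _)
        exact mul_le_mul_of_nonneg_right hp (by positivity)
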